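/- Let Z ∈ ℝ^{r×n} and J = I_n − (1/n)·1_n 1_nᵀ. Suppose Z J Zᵀ = N ∇ Nᵀ with ∇ ∈ ℝ^{r×r} diagonal and positive definite and N ∈ ℝ^{r×r} orthogonal (full-rank case r' = r). Define K = J Zᵀ N ∇^{−1/2} and V̂ = √n · N Kᵀ. Then V̂ satisfies V̂ V̂ᵀ = n I_r and V̂ 1_n = 0, and V̂ maximizes tr(Z Vᵀ) over all V ∈ ℝ^{r×n} with V Vᵀ = n I_r and V 1_n = 0. -/
import Mathlib


open Matrix

/-- Theorem 3.1, full-rank case: with J = I − (1/n)11ᵀ, eigendecomposition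
Z J Zᵀ = N ∇ Nᵀ (∇ positive diagonal, N orthogonal), K = J Zᵀ N ∇^{−1/2} and
V̂ = √n · N Kᵀ, the matrix V̂ satisfies V̂ V̂ᵀ = n I_r, V̂ 1_n = 0 and maximizes
tr(Z Vᵀ) over all V with V Vᵀ = n I_r and V 1_n = 0. -/
theorem stmt_6 {r n : ℕ} (hn : 0 < n) (Z : Matrix (Fin r) (Fin n) ℝ)
    (J : Matrix (Fin n) (Fin n) ℝ)
    (hJ : J = 1 - (n : ℝ)⁻¹ • (Matrix.of fun _ _ => (1 : ℝ)))
    (N : Matrix (Fin r) (Fin r) ℝ) (hN : N * Nᵀ = 1) (hN' : Nᵀ * N = 1)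
    (d : Fin r → ℝ) (hd : ∀ i, 0 < d i)
    (hZ : Z * J * Zᵀ = N * Matrix.diagonal d * Nᵀ)
    (K : Matrix (Fin n) (Fin r) ℝ)
    (hK : K = J * Zᵀ * N * Matrix.diagonal (fun i => (Real.sqrt (d i))⁻¹))
    (Vhat : Matrix (Fin r) (Fin n) ℝ) (hVhat : Vhat = Real.sqrt n • (N * Kᵀ)) :
    Vhat * Vhatᵀ = (n : ℝ) • (1 : Matrix (Fin r) (Fin r) ℝ) ∧
      Vhat *ᵥ (fun _ => (1 : ℝ)) = 0 ∧
      ∀ V : Matrix (Fin r) (Fin n) ℝ,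
        V * Vᵀ = (n : ℝ) • (1 : Matrix (Fin r) (Fin r) ℝ) →
        V *ᵥ (fun _ => (1 : ℝ)) = 0 →
        Matrix.trace (Z * Vᵀ) ≤ Matrix.trace (Z * Vhatᵀ) := by
  have hn0 : (n : ℝ) ≠ 0 := Nat.cast_ne_zero.mpr hn.ne'
  set s : Fin r → ℝ := fun i => Real.sqrt (d i) with hs
  have hs_pos : ∀ i, 0 < s i := fun i => Real.sqrt_pos.mpr (hd i)
  have hs_ne : ∀ i, s i ≠ 0 := fun i => (hs_pos i).ne'
  have hss : ∀ i, s i * s i = d i := fun i => Real.mul_self_sqrt (hd i).le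
  set D : Matrix (Fin r) (Fin r) ℝ := Matrix.diagonal d with hD
  set S : Matrix (Fin r) (Fin r) ℝ := Matrix.diagonal s with hSdef
  set Si : Matrix (Fin r) (Fin r) ℝ := Matrix.diagonal (fun i => (s i)⁻¹) with hSidef
  have hSSi : S * Si = 1 := by
    rw [hSdef, hSidef, Matrix.diagonal_mul_diagonal]
    rw [show (fun i => s i * (s i)⁻¹) = fun _ => (1 : ℝ) from
      funext fun i => mul_inv_cancel₀ (hs_ne i)]
    exact Matrix.diagonal_one
  have hSiS : Si * S = 1 := by
    rw [hSdef, hSidef, Matrix.diagonal_mul_diagonal]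
    rw [show (fun i => (s i)⁻¹ * s i) = fun _ => (1 : ℝ) from
      funext fun i => inv_mul_cancel₀ (hs_ne i)]
    exact Matrix.diagonal_one
  have hSiDSi : Si * (D * Si) = 1 := by
    rw [hSidef, hD, Matrix.diagonal_mul_diagonal, Matrix.diagonal_mul_diagonal]
    rw [show (fun i => (s i)⁻¹ * (d i * (s i)⁻¹)) = fun _ => (1 : ℝ) from
      funext fun i => by rw [← hss i]; field_simp [hs_ne i]]
    exact Matrix.diagonal_one
  -- J is symmetric and idempotent, and kills the all-ones vector
  have hJT : Jᵀ = J := by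
    subst hJ
    ext i j
    simp [Matrix.transpose_apply, Matrix.sub_apply, Matrix.smul_apply, Matrix.one_apply, eq_comm]
  have hJJ : J * J = J := by
    subst hJ
    ext i j
    simp only [Matrix.mul_apply, Matrix.sub_apply, Matrix.smul_apply, Matrix.one_apply,
      Matrix.of_apply, smul_eq_mul, mul_one, sub_mul, mul_sub]
    rw [Finset.sum_sub_distrib, Finset.sum_sub_distrib]
    simp [Finset.sum_ite_eq, Finset.sum_ite_eq', mul_comm, hn0]
  have hJ1 : J *ᵥ (fun _ => (1 : ℝ)) = 0 := by
    subst hJ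
    ext i
    simp only [Matrix.mulVec, dotProduct, Matrix.sub_apply, Matrix.smul_apply,
      Matrix.one_apply, Matrix.of_apply, smul_eq_mul, mul_one]
    rw [Finset.sum_sub_distrib]
    simp [hn0]
  -- feasible V satisfy V * J = V
  have hVJ : ∀ V : Matrix (Fin r) (Fin n) ℝ, V *ᵥ (fun _ => (1 : ℝ)) = 0 → V * J = V := by
    intro V hV1
    have hrow : ∀ i, ∑ k, V i k = 0 := by
      intro i
      have := congrFun hV1 i
      simpa [Matrix.mulVec, dotProduct] using this
    subst hJ
    ext i j
    simp only [Matrix.mul_apply, Matrix.sub_apply, Matrix.smul_apply, Matrix.one_apply,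
      Matrix.of_apply, smul_eq_mul, mul_one, mul_sub]
    rw [Finset.sum_sub_distrib, ← Finset.sum_mul, hrow i, zero_mul, sub_zero]
    simp [Finset.sum_ite_eq']
  -- the matrix C with Vhat = √n • C
  have hSiT : Siᵀ = Si := by rw [hSidef]; exact Matrix.diagonal_transpose _
  set C : Matrix (Fin r) (Fin n) ℝ := N * (Si * (Nᵀ * (Z * J))) with hC
  have hVhatC : Vhat = Real.sqrt n • C := by
    rw [hVhat, hK, hC]
    congr 1
    simp only [Matrix.transpose_mul, Matrix.transpose_transpose, hSiT, hJT, Matrix.mul_assoc]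
  have hCT : Cᵀ = J * (Zᵀ * (N * (Si * Nᵀ))) := by
    rw [hC]
    simp only [Matrix.transpose_mul, Matrix.transpose_transpose, hSiT, hJT, Matrix.mul_assoc]
  -- cancellation helpers
  have cN : ∀ {m : ℕ} (X : Matrix (Fin r) (Fin m) ℝ), N * (Nᵀ * X) = X := by
    intro m X; rw [← Matrix.mul_assoc, hN, Matrix.one_mul]
  have cN' : ∀ {m : ℕ} (X : Matrix (Fin r) (Fin m) ℝ), Nᵀ * (N * X) = X := by
    intro m X; rw [← Matrix.mul_assoc, hN', Matrix.one_mul]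
  have cS : ∀ {m : ℕ} (X : Matrix (Fin r) (Fin m) ℝ), S * (Si * X) = X := by
    intro m X; rw [← Matrix.mul_assoc, hSSi, Matrix.one_mul]
  have cSiD : ∀ {m : ℕ} (X : Matrix (Fin r) (Fin m) ℝ), Si * (D * (Si * X)) = X := by
    intro m X; rw [← Matrix.mul_assoc, ← Matrix.mul_assoc, Matrix.mul_assoc Si D Si,
      hSiDSi, Matrix.one_mul]
  have hZJZ : ∀ {m : ℕ} (Y : Matrix (Fin r) (Fin m) ℝ),
      Z * (J * (Zᵀ * Y)) = N * (D * (Nᵀ * Y)) := by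
    intro m Y
    calc Z * (J * (Zᵀ * Y)) = (Z * J * Zᵀ) * Y := by simp only [Matrix.mul_assoc]
    _ = (N * D * Nᵀ) * Y := by rw [hZ]
    _ = N * (D * (Nᵀ * Y)) := by simp only [Matrix.mul_assoc]
  have cJ : ∀ {m : ℕ} (X : Matrix (Fin n) (Fin m) ℝ), J * (J * X) = J * X := by
    intro m X; rw [← Matrix.mul_assoc, hJJ]
  -- C has orthonormal rows
  have hCC : C * Cᵀ = 1 := by
    rw [hC, hCT]
    calc N * (Si * (Nᵀ * (Z * J))) * (J * (Zᵀ * (N * (Si * Nᵀ))))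
        = N * (Si * (Nᵀ * (Z * (J * (J * (Zᵀ * (N * (Si * Nᵀ)))))))) := by
          simp only [Matrix.mul_assoc]
    _ = N * (Si * (Nᵀ * (Z * (J * (Zᵀ * (N * (Si * Nᵀ))))))) := by rw [cJ]
    _ = N * (Si * (Nᵀ * (N * (D * (Nᵀ * (N * (Si * Nᵀ))))))) := by rw [hZJZ]
    _ = N * (Si * (D * (Si * Nᵀ))) := by rw [cN', cN']
    _ = N * Nᵀ := by rw [cSiD]
    _ = 1 := hN
  -- Z*J in terms of C
  set P : Matrix (Fin r) (Fin n) ℝ := Nᵀ * C with hP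
  have hZJC : Z * J = N * (S * P) := by
    rw [hP, hC]
    calc Z * J = N * (Nᵀ * (Z * J)) := by rw [cN]
    _ = N * (S * (Si * (Nᵀ * (Z * J)))) := by rw [cS]
    _ = N * (S * (Nᵀ * (N * (Si * (Nᵀ * (Z * J)))))) := by rw [cN']
  have hPP : ∀ i, ∑ k, P i k * P i k = 1 := by
    intro i
    have h1 : P * Pᵀ = 1 := by
      rw [hP, Matrix.transpose_mul, Matrix.transpose_transpose]
      calc Nᵀ * C * (Cᵀ * N) = Nᵀ * ((C * Cᵀ) * N) := by simp only [Matrix.mul_assoc]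
      _ = 1 := by rw [hCC, Matrix.one_mul, hN']
    have := congrFun (congrFun h1 i) i
    simpa [Matrix.mul_apply, Matrix.one_apply] using this
  -- C kills the ones vector
  have hC1 : C *ᵥ (fun _ => (1 : ℝ)) = 0 := by
    rw [hC]
    calc (N * (Si * (Nᵀ * (Z * J)))) *ᵥ (fun _ => (1 : ℝ))
        = ((N * (Si * (Nᵀ * Z))) * J) *ᵥ (fun _ => (1 : ℝ)) := by simp only [Matrix.mul_assoc]
    _ = (N * (Si * (Nᵀ * Z))) *ᵥ (J *ᵥ (fun _ => (1 : ℝ))) := by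
        rw [← Matrix.mulVec_mulVec]
    _ = 0 := by rw [hJ1, Matrix.mulVec_zero]
  have hCJ : C * J = C := by
    rw [hC]
    calc N * (Si * (Nᵀ * (Z * J))) * J = N * (Si * (Nᵀ * (Z * (J * J)))) := by
          simp only [Matrix.mul_assoc]
    _ = N * (Si * (Nᵀ * (Z * J))) := by rw [hJJ]
  -- key trace formula
  have key : ∀ V : Matrix (Fin r) (Fin n) ℝ, V *ᵥ (fun _ => (1 : ℝ)) = 0 →
      Matrix.trace (Z * Vᵀ) = ∑ i, s i * ∑ k, P i k * (Nᵀ * V) i k := by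
    intro V hV1
    have hVJeq : Vᵀ = J * Vᵀ := by
      have := congrArg Matrix.transpose (hVJ V hV1)
      rw [Matrix.transpose_mul, hJT] at this
      exact this.symm
    calc Matrix.trace (Z * Vᵀ) = Matrix.trace ((Z * J) * Vᵀ) := by
          rw [Matrix.mul_assoc, ← hVJeq]
    _ = Matrix.trace (N * (S * (P * Vᵀ))) := by
          rw [hZJC]; simp only [Matrix.mul_assoc]
    _ = Matrix.trace (S * (P * (Vᵀ * N))) := by
          rw [Matrix.trace_mul_comm]; simp only [Matrix.mul_assoc]
    _ = ∑ i, s i * ∑ k, P i k * (Nᵀ * V) i k := by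
          rw [Matrix.trace]
          congr 1
          funext i
          rw [Matrix.diag_apply, hSdef, Matrix.diagonal_mul]
          congr 1
          rw [Matrix.mul_apply]
          refine Finset.sum_congr rfl fun k _ => ?_
          congr 1
          rw [Matrix.mul_apply, Matrix.mul_apply]
          exact Finset.sum_congr rfl fun l _ => by
            simp [Matrix.transpose_apply, mul_comm]
  -- the three claims
  have claim1 : Vhat * Vhatᵀ = (n : ℝ) • (1 : Matrix (Fin r) (Fin r) ℝ) := by
    rw [hVhatC, Matrix.transpose_smul, Matrix.smul_mul, Matrix.mul_smul, hCC, smul_smul]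
    rw [Real.mul_self_sqrt (Nat.cast_nonneg n)]
  have claim2 : Vhat *ᵥ (fun _ => (1 : ℝ)) = 0 := by
    rw [hVhatC, Matrix.smul_mulVec, hC1, smul_zero]
  refine ⟨claim1, claim2, ?_⟩
  intro V hVV hV1
  -- trace for Vhat
  have hNVhat : Nᵀ * Vhat = Real.sqrt n • P := by
    rw [hVhatC, Matrix.mul_smul, hP]
  have htVhat : Matrix.trace (Z * Vhatᵀ) = ∑ i, s i * Real.sqrt n := by
    rw [key Vhat claim2]
    congr 1
    funext i
    congr 1
    rw [hNVhat]
    calc ∑ k, P i k * (Real.sqrt n • P) i k = Real.sqrt n * ∑ k, P i k * P i k := by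
          rw [Finset.mul_sum]
          exact Finset.sum_congr rfl fun k _ => by simp [Matrix.smul_apply]; ring
    _ = Real.sqrt n := by rw [hPP i, mul_one]
  rw [htVhat, key V hV1]
  -- rows of Nᵀ V have squared norm n
  have hWW : ∀ i, ∑ k, (Nᵀ * V) i k * (Nᵀ * V) i k = n := by
    intro i
    have h1 : (Nᵀ * V) * (Nᵀ * V)ᵀ = (n : ℝ) • (1 : Matrix (Fin r) (Fin r) ℝ) := by
      rw [Matrix.transpose_mul, Matrix.transpose_transpose]
      calc Nᵀ * V * (Vᵀ * N) = Nᵀ * ((V * Vᵀ) * N) := by simp only [Matrix.mul_assoc]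
      _ = Nᵀ * (((n : ℝ) • (1 : Matrix (Fin r) (Fin r) ℝ)) * N) := by rw [hVV]
      _ = (n : ℝ) • (Nᵀ * N) := by rw [Matrix.smul_mul, Matrix.one_mul, Matrix.mul_smul]
      _ = (n : ℝ) • (1 : Matrix (Fin r) (Fin r) ℝ) := by rw [hN']
    have := congrFun (congrFun h1 i) i
    simpa [Matrix.mul_apply, Matrix.one_apply, mul_comm] using this
  refine Finset.sum_le_sum fun i _ => ?_
  refine mul_le_mul_of_nonneg_left ?_ (hs_pos i).le
  -- Cauchy-Schwarz
  have cs := Finset.sum_mul_sq_le_sq_mul_sq Finset.univ (fun k => P i k) (fun k => (Nᵀ * V) i k)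
  have h2 : (∑ k, P i k * (Nᵀ * V) i k) ^ 2 ≤ (n : ℝ) := by
    calc (∑ k, P i k * (Nᵀ * V) i k) ^ 2
        ≤ (∑ k, P i k ^ 2) * ∑ k, (Nᵀ * V) i k ^ 2 := cs
    _ = (∑ k, P i k * P i k) * ∑ k, (Nᵀ * V) i k * (Nᵀ * V) i k := by
        simp only [sq]
    _ = (n : ℝ) := by rw [hPP i, hWW i, one_mul]
  calc ∑ k, P i k * (Nᵀ * V) i k ≤ |∑ k, P i k * (Nᵀ * V) i k| := le_abs_self _
  _ = Real.sqrt ((∑ k, P i k * (Nᵀ * V) i k) ^ 2) := (Real.sqrt_sq_eq_abs _).symm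
  _ ≤ Real.sqrt n := Real.sqrt_le_sqrt h2
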